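/- Recursion for the conditional (pinned) mean (core of Theorem 2): with P_k defined by P₀ = 0 and P_{k+1} = A_kP_kA_kᵀ + B_kB_kᵀ, P_N invertible, for any x̄₀, x̄_N ∈ ℝ^n define ℓ_k := Φ(k,0)x̄₀ + P_kΦ(N,k)ᵀP_N⁻¹(x̄_N − Φ(N,0)x̄₀), and let Â_k := (I − B_kB_kᵀΦ(N,k+1)ᵀG_r(N,k)†Φ(N,k+1))A_k, where G_r(N,k)† is the Moore–Penrose inverse of G_r(N,k). Then for every k ∈ {0,…,N−1}: ℓ_{k+1} = Â_kℓ_k + B_kB_kᵀΦ(N,k+1)ᵀG_r(N,k)†x̄_N. -/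

import Mathlib

open Matrix

noncomputable section

/-- `prodAux A l d = A (l+d-1) * ⋯ * A l` (the empty product for `d = 0`). -/
def prodAux {n : ℕ} (A : ℕ → Matrix (Fin n) (Fin n) ℝ) (l : ℕ) :
    ℕ → Matrix (Fin n) (Fin n) ℝ
  | 0 => 1
  | d + 1 => A (l + d) * prodAux A l d

/-- State-transition matrix `Φ(k,l)`: `A_{k-1} ⋯ A_l` for `k > l`, `I` for `k = l`,
and `A_k⁻¹ ⋯ A_{l-1}⁻¹` for `k < l`. -/
def Phi {n : ℕ} (A : ℕ → Matrix (Fin n) (Fin n) ℝ) (k l : ℕ) :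
    Matrix (Fin n) (Fin n) ℝ :=
  if l ≤ k then prodAux A l (k - l) else (prodAux A k (l - k))⁻¹

/-- Reachability Gramian `G_r(k₁,k₀) = Σ_{k=k₀}^{k₁−1} Φ(k₁,k+1) B_k B_kᵀ Φ(k₁,k+1)ᵀ`. -/
def Gr {n m : ℕ} (A : ℕ → Matrix (Fin n) (Fin n) ℝ) (B : ℕ → Matrix (Fin n) (Fin m) ℝ)
    (k₁ k₀ : ℕ) : Matrix (Fin n) (Fin n) ℝ :=
  ∑ k ∈ Finset.Ico k₀ k₁, Phi A k₁ (k+1) * B k * (B k)ᵀ * (Phi A k₁ (k+1))ᵀ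

/-- Controllability Gramian `G_c(k₁,k₀) = Σ_{k=k₀}^{k₁−1} Φ(k₀,k+1) B_k B_kᵀ Φ(k₀,k+1)ᵀ`. -/
def Gc {n m : ℕ} (A : ℕ → Matrix (Fin n) (Fin n) ℝ) (B : ℕ → Matrix (Fin n) (Fin m) ℝ)
    (k₁ k₀ : ℕ) : Matrix (Fin n) (Fin n) ℝ :=
  ∑ k ∈ Finset.Ico k₀ k₁, Phi A k₀ (k+1) * B k * (B k)ᵀ * (Phi A k₀ (k+1))ᵀ

/-- `H` is the Moore–Penrose inverse of `G`. -/
def IsMoorePenrose {n : ℕ} (G H : Matrix (Fin n) (Fin n) ℝ) : Prop :=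
  G * H * G = G ∧ H * G * H = H ∧ (G * H)ᵀ = G * H ∧ (H * G)ᵀ = H * G

namespace Stmt12Aux

variable {n m : ℕ}

lemma prodAux_succ (A : ℕ → Matrix (Fin n) (Fin n) ℝ) (l d : ℕ) :
    prodAux A l (d+1) = A (l+d) * prodAux A l d := rfl

lemma prodAux_add (A : ℕ → Matrix (Fin n) (Fin n) ℝ) (l d : ℕ) :
    ∀ e, prodAux A l (d + e) = prodAux A (l + d) e * prodAux A l d
  | 0 => by simp [prodAux]
  | e + 1 => by
    show prodAux A l ((d + e) + 1) = _
    rw [prodAux_succ, prodAux_add A l d e, prodAux_succ, ← Matrix.mul_assoc,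
      Nat.add_assoc]

lemma Phi_eq (A : ℕ → Matrix (Fin n) (Fin n) ℝ) {k l : ℕ} (h : l ≤ k) :
    Phi A k l = prodAux A l (k - l) := if_pos h

lemma Phi_self (A : ℕ → Matrix (Fin n) (Fin n) ℝ) (k : ℕ) : Phi A k k = 1 := by
  rw [Phi_eq A le_rfl, Nat.sub_self]; rfl

lemma Phi_comp (A : ℕ → Matrix (Fin n) (Fin n) ℝ) {l j k : ℕ} (h1 : l ≤ j) (h2 : j ≤ k) :
    Phi A k l = Phi A k j * Phi A j l := by
  rw [Phi_eq A (h1.trans h2), Phi_eq A h2, Phi_eq A h1]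
  have h3 : k - l = (j - l) + (k - j) := by omega
  rw [h3, prodAux_add]
  have h4 : l + (j - l) = j := by omega
  rw [h4]

lemma Phi_succ_right (A : ℕ → Matrix (Fin n) (Fin n) ℝ) {k N : ℕ} (h : k < N) :
    Phi A N k = Phi A N (k+1) * A k := by
  rw [Phi_comp A (Nat.le_succ k) h]
  congr 1
  rw [Phi_eq A (Nat.le_succ k)]
  have h1 : k + 1 - k = 1 := by omega
  rw [h1]
  show A (k + 0) * 1 = A k
  simp

lemma Phi_succ_left (A : ℕ → Matrix (Fin n) (Fin n) ℝ) {l k : ℕ} (h : l ≤ k) :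
    Phi A (k+1) l = A k * Phi A k l := by
  rw [Phi_eq A (h.trans (Nat.le_succ k)), Phi_eq A h]
  have h1 : k + 1 - l = (k - l) + 1 := by omega
  rw [h1, prodAux_succ]
  have h2 : l + (k - l) = k := by omega
  rw [h2]

lemma Gr_psd (A : ℕ → Matrix (Fin n) (Fin n) ℝ) (B : ℕ → Matrix (Fin n) (Fin m) ℝ)
    (k₁ k₀ : ℕ) : (Gr A B k₁ k₀).PosSemidef := by
  rw [Gr]
  induction (Finset.Ico k₀ k₁) using Finset.cons_induction with
  | empty => simpa using Matrix.PosSemidef.zero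
  | cons a s ha ih =>
    rw [Finset.sum_cons]
    refine Matrix.PosSemidef.add ?_ ih
    have : Phi A k₁ (a+1) * B a * (B a)ᵀ * (Phi A k₁ (a+1))ᵀ
        = (Phi A k₁ (a+1) * B a) * (Phi A k₁ (a+1) * B a)ᴴ := by
      rw [conjTranspose_eq_transpose_of_trivial, transpose_mul]
      simp [Matrix.mul_assoc]
    rw [this]
    exact posSemidef_self_mul_conjTranspose _

/-- Sum of PSD matrices is zero componentwise: if `Cᴴ * C + S = 0` with `S` PSD then `C = 0`. -/
lemma eq_zero_of_psd_add {p : ℕ} {C : Matrix (Fin n) (Fin p) ℝ}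
    {S : Matrix (Fin p) (Fin p) ℝ} (hS : S.PosSemidef)
    (h : Cᴴ * C + S = 0) : C = 0 := by
  have hCpsd : (Cᴴ * C).PosSemidef := posSemidef_conjTranspose_mul_self C
  have hq : ∀ x : Fin p → ℝ, star x ⬝ᵥ (Cᴴ * C) *ᵥ x = 0 := by
    intro x
    have a1 := hCpsd.dotProduct_mulVec_nonneg x
    have a2 := hS.dotProduct_mulVec_nonneg x
    have a3 : star x ⬝ᵥ (Cᴴ * C) *ᵥ x + star x ⬝ᵥ S *ᵥ x = 0 := by
      rw [← dotProduct_add, ← add_mulVec, h, zero_mulVec, dotProduct_zero]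
    linarith
  have hz : ∀ x : Fin p → ℝ, C *ᵥ x = 0 := by
    intro x
    have := hq x
    rw [← Matrix.mulVec_mulVec, dotProduct_mulVec, ← star_mulVec] at this
    exact dotProduct_star_self_eq_zero.mp this
  ext i j
  have := congrFun (hz (Pi.single j 1)) i
  simpa [Matrix.mulVec_single] using this

lemma mp_key {p : ℕ} {G H : Matrix (Fin n) (Fin n) ℝ} {X : Matrix (Fin n) (Fin p) ℝ}
    {R : Matrix (Fin n) (Fin n) ℝ} (hR : R.PosSemidef)
    (hG : G = X * Xᵀ + R) (hmp : IsMoorePenrose G H) :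
    Xᵀ * (H * G) = Xᵀ := by
  obtain ⟨h1, _, _, h4⟩ := hmp
  set Q : Matrix (Fin n) (Fin n) ℝ := 1 - H * G with hQ
  have hQt : Qᵀ = Q := by rw [hQ, transpose_sub, transpose_one, h4]
  have hGQ : G * Q = 0 := by
    rw [hQ, Matrix.mul_sub, Matrix.mul_one, ← Matrix.mul_assoc, h1, sub_self]
  have hzero : Qᵀ * G * Q = 0 := by rw [Matrix.mul_assoc, hGQ, Matrix.mul_zero]
  have hC : (Xᵀ * Q) = 0 := by
    apply eq_zero_of_psd_add (S := Qᵀ * R * Q)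
    · have := hR.mul_mul_conjTranspose_same Qᵀ
      rwa [conjTranspose_eq_transpose_of_trivial, transpose_transpose] at this
    · rw [conjTranspose_eq_transpose_of_trivial, transpose_mul, transpose_transpose]
      calc Qᵀ * X * (Xᵀ * Q) + Qᵀ * R * Q
          = Qᵀ * (X * Xᵀ + R) * Q := by
            rw [hQt]
            simp [Matrix.mul_add, Matrix.add_mul, Matrix.mul_assoc]
        _ = 0 := by rw [← hG, hzero]
  have : Xᵀ * Q = Xᵀ - Xᵀ * (H * G) := by
    rw [hQ, Matrix.mul_sub, Matrix.mul_one]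
  rw [this] at hC
  linear_combination (norm := abel) -hC

lemma gramKey {N : ℕ} (A : ℕ → Matrix (Fin n) (Fin n) ℝ) (B : ℕ → Matrix (Fin n) (Fin m) ℝ)
    (P : ℕ → Matrix (Fin n) (Fin n) ℝ) (hP0 : P 0 = 0)
    (hPrec : ∀ k < N, P (k+1) = A k * P k * (A k)ᵀ + B k * (B k)ᵀ) :
    ∀ d k, k + d = N → Phi A N k * P k * (Phi A N k)ᵀ + Gr A B N k = P N := by
  intro d
  induction d with
  | zero =>
    intro k hk
    have hkN : k = N := by omega
    subst hkN
    rw [Phi_self, Gr, Finset.Ico_self, Finset.sum_empty]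
    simp
  | succ d ih =>
    intro k hk
    have hkN : k < N := by omega
    have h1 := ih (k+1) (by omega)
    rw [← h1, hPrec k hkN, Phi_succ_right A hkN]
    simp only [Gr]
    rw [Finset.sum_eq_sum_Ico_succ_bot hkN]
    simp only [transpose_mul, Matrix.mul_add, Matrix.add_mul, Matrix.mul_assoc]
    abel

end Stmt12Aux

open Stmt12Aux in
/-- Recursion for the conditional (pinned) mean. -/
theorem stmt12 {n m N : ℕ} (hn : 0 < n) (hm : 0 < m) (hN : 0 < N)
    (A : ℕ → Matrix (Fin n) (Fin n) ℝ) (B : ℕ → Matrix (Fin n) (Fin m) ℝ)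
    (hA : ∀ k < N, IsUnit (A k).det)
    (P : ℕ → Matrix (Fin n) (Fin n) ℝ)
    (hP0 : P 0 = 0)
    (hPrec : ∀ k < N, P (k+1) = A k * P k * (A k)ᵀ + B k * (B k)ᵀ)
    (hPN : IsUnit (P N).det)
    -- `Gd k` is the Moore–Penrose inverse of `G_r(N,k)`
    (Gd : ℕ → Matrix (Fin n) (Fin n) ℝ)
    (hGd : ∀ k < N, IsMoorePenrose (Gr A B N k) (Gd k))
    (x0 xN : Fin n → ℝ)
    (l : ℕ → Fin n → ℝ)
    (hl : ∀ k, l k = Phi A k 0 *ᵥ x0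
      + (P k * (Phi A N k)ᵀ * (P N)⁻¹) *ᵥ (xN - Phi A N 0 *ᵥ x0))
    (Ahat : ℕ → Matrix (Fin n) (Fin n) ℝ)
    (hAhat : ∀ k, Ahat k =
      ((1 : Matrix (Fin n) (Fin n) ℝ)
        - B k * (B k)ᵀ * (Phi A N (k+1))ᵀ * Gd k * Phi A N (k+1)) * A k) :
    ∀ k < N,
      l (k+1) = Ahat k *ᵥ l k
        + (B k * (B k)ᵀ * (Phi A N (k+1))ᵀ * Gd k) *ᵥ xN := by
  intro k hk
  -- abbreviations (plain `have`-level definitions via local notation)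
  have hF : Phi A N k = Phi A N (k+1) * A k := Phi_succ_right A hk
  have hcomp : Phi A N 0 = Phi A N k * Phi A k 0 := Phi_comp A (Nat.zero_le k) hk.le
  have hPNinv : P N * (P N)⁻¹ = 1 := Matrix.mul_nonsing_inv _ hPN
  have hgram : Phi A N k * P k * (Phi A N k)ᵀ + Gr A B N k = P N :=
    gramKey A B P hP0 hPrec (N - k) k (by omega)
  have hGdec : Gr A B N k
      = (Phi A N (k+1) * B k) * (Phi A N (k+1) * B k)ᵀ + Gr A B N (k+1) := by
    rw [Gr, Finset.sum_eq_sum_Ico_succ_bot hk, transpose_mul]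
    rw [show (∑ j ∈ Finset.Ico (k+1) N,
        Phi A N (j+1) * B j * (B j)ᵀ * (Phi A N (j+1))ᵀ) = Gr A B N (k+1) from rfl]
    simp [Matrix.mul_assoc]
  have hkey : (Phi A N (k+1) * B k)ᵀ * (Gd k * Gr A B N k) = (Phi A N (k+1) * B k)ᵀ :=
    mp_key (Gr_psd A B N (k+1)) hGdec (hGd k hk)
  set M' := B k * (B k)ᵀ * (Phi A N (k+1))ᵀ * Gd k with hM'
  have hMG : M' * Gr A B N k = B k * (B k)ᵀ * (Phi A N (k+1))ᵀ := by
    have e : M' = B k * ((Phi A N (k+1) * B k)ᵀ * Gd k) := by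
      rw [hM', transpose_mul]
      simp [Matrix.mul_assoc]
    rw [e, Matrix.mul_assoc, Matrix.mul_assoc ((Phi A N (k+1) * B k)ᵀ), hkey,
      transpose_mul]
    simp [Matrix.mul_assoc]
  have hAk : Ahat k = A k - M' * Phi A N k := by
    rw [hAhat k, Matrix.sub_mul, Matrix.one_mul, hF, Matrix.mul_assoc, hM']
  -- P recursion rearranged
  have hY1 : A k * P k * (A k)ᵀ = P (k+1) - B k * (B k)ᵀ := by
    rw [hPrec k hk]; abel
  -- identity 1
  have id1 : Ahat k * Phi A k 0 + M' * Phi A N 0 = Phi A (k+1) 0 := by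
    rw [hAk, Matrix.sub_mul, hcomp, Phi_succ_left A (Nat.zero_le k), Matrix.mul_assoc]
    abel
  -- identity 2
  have id2 : Ahat k * (P k * (Phi A N k)ᵀ * (P N)⁻¹) + M'
      = P (k+1) * (Phi A N (k+1))ᵀ * (P N)⁻¹ := by
    have c1 : A k * (P k * (Phi A N k)ᵀ * (P N)⁻¹)
        = (P (k+1) - B k * (B k)ᵀ) * (Phi A N (k+1))ᵀ * (P N)⁻¹ := by
      rw [hF, transpose_mul, ← hY1]
      simp [Matrix.mul_assoc]
    have c2 : M' * Phi A N k * (P k * (Phi A N k)ᵀ * (P N)⁻¹)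
        = M' - B k * (B k)ᵀ * (Phi A N (k+1))ᵀ * (P N)⁻¹ := by
      have c3 : Phi A N k * (P k * (Phi A N k)ᵀ * (P N)⁻¹)
          = (P N - Gr A B N k) * (P N)⁻¹ := by
        rw [show P N - Gr A B N k = Phi A N k * P k * (Phi A N k)ᵀ by
          rw [← hgram]; abel]
        simp [Matrix.mul_assoc]
      rw [Matrix.mul_assoc, c3, Matrix.sub_mul, Matrix.mul_sub, ← Matrix.mul_assoc,
        ← Matrix.mul_assoc, Matrix.mul_assoc M' (P N) (P N)⁻¹, hPNinv, Matrix.mul_one,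
        hMG]
    rw [hAk, Matrix.sub_mul, c1, c2]
    simp only [Matrix.sub_mul, Matrix.mul_assoc]
    abel
  -- the vector computation
  rw [hl (k+1), hl k]
  have hxN : xN = Phi A N 0 *ᵥ x0 + (xN - Phi A N 0 *ᵥ x0) := by abel
  rw [show M' *ᵥ xN = (M' * Phi A N 0) *ᵥ x0 + M' *ᵥ (xN - Phi A N 0 *ᵥ x0) by
    conv_lhs => rw [hxN]
    rw [Matrix.mulVec_add, Matrix.mulVec_mulVec]]
  rw [Matrix.mulVec_add, Matrix.mulVec_mulVec, Matrix.mulVec_mulVec]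
  rw [← id1, ← id2, Matrix.add_mulVec, Matrix.add_mulVec]
  abel


end
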